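/- arXiv:2505.10916 — 2 statements merged into one kernel-verified Lean document; each statement's English description precedes it below -/
import Mathlib

section
/- For f ∈ C¹([-a,a]), the L²-norm of the derivative of V[f] on (-a,a) satisfies ‖∂ₓ V[f]‖_{L²(-a,a)} ≤ (1/√2) ‖f'‖_{L²(-a,a)}. -/
open MeasureTheory intervalIntegral Set Metric

/-- Weighted Cauchy–Schwarz on `[0,1]`: `(∫ σ·h)² ≤ ½ ∫ σ·h²`. -/
lemma cs_half_aux {h : ℝ → ℝ} (hcont : Continuous h) :
    (∫ σ in (0:ℝ)..1, σ * h σ) ^ 2 ≤ (1/2) * ∫ σ in (0:ℝ)..1, σ * (h σ)^2 := by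
  set I := ∫ σ in (0:ℝ)..1, σ * h σ with hI
  have h0 : (0:ℝ) ≤ ∫ σ in (0:ℝ)..1, σ * (h σ - 2*I)^2 :=
    intervalIntegral.integral_nonneg (by norm_num)
      (fun σ hσ => mul_nonneg hσ.1 (sq_nonneg _))
  have i1 : IntervalIntegrable (fun σ => σ * (h σ)^2) volume 0 1 :=
    (continuous_id.mul ((hcont.pow 2))).intervalIntegrable _ _
  have i2 : IntervalIntegrable (fun σ => (4*I) * (σ * h σ)) volume 0 1 :=
    (continuous_const.mul (continuous_id.mul hcont)).intervalIntegrable _ _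
  have i3 : IntervalIntegrable (fun σ : ℝ => (4*I^2) * σ) volume 0 1 :=
    (continuous_const.mul continuous_id).intervalIntegrable _ _
  have hexp : (fun σ => σ * (h σ - 2*I)^2)
      = fun σ => (σ * (h σ)^2 - (4*I) * (σ * h σ)) + (4*I^2) * σ := by
    funext σ; ring
  rw [hexp, intervalIntegral.integral_add (i1.sub i2) i3,
    intervalIntegral.integral_sub i1 i2, intervalIntegral.integral_const_mul,
    intervalIntegral.integral_const_mul, integral_id] at h0
  rw [← hI] at h0
  norm_num at h0
  nlinarith [h0]

/-- Differentiation under the integral for `V[f]`. -/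
lemma derivV_aux {f : ℝ → ℂ} (hf : ContDiff ℝ 1 f) (x : ℝ) :
    HasDerivAt (fun y : ℝ => ∫ σ in (0:ℝ)..1, f (σ * y))
      (∫ σ in (0:ℝ)..1, σ • deriv f (σ * x)) x := by
  have hgc : Continuous (deriv f) := hf.continuous_deriv le_rfl
  have hfd : Differentiable ℝ f := hf.differentiable one_ne_zero
  obtain ⟨M, hM⟩ := (isCompact_Icc (a := -(|x|+1)) (b := |x|+1)).exists_bound_of_continuousOn
    hgc.continuousOn
  have key := intervalIntegral.hasDerivAt_integral_of_dominated_loc_of_deriv_le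
    (F := fun y σ => f (σ * y)) (F' := fun y σ => σ • deriv f (σ * y))
    (x₀ := x) (s := ball x 1) (a := (0:ℝ)) (b := 1) (μ := volume) (bound := fun _ => M)
    (ball_mem_nhds x one_pos)
    (Filter.Eventually.of_forall fun y =>
      ((hf.continuous.comp (continuous_id.mul continuous_const)).aestronglyMeasurable))
    ((hf.continuous.comp (continuous_id.mul continuous_const)).intervalIntegrable _ _)
    ((continuous_id.smul (hgc.comp (continuous_id.mul continuous_const))).aestronglyMeasurable)
    (Filter.Eventually.of_forall fun σ hσ y hy => by
      rw [uIoc_of_le (by norm_num : (0:ℝ) ≤ 1)] at hσ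
      have hσ0 : 0 < σ := hσ.1
      have hσ1 : σ ≤ 1 := hσ.2
      have hy1 : |y| < |x| + 1 := by
        have := abs_sub_abs_le_abs_sub y x
        have := mem_ball_iff_norm.mp hy
        simp only [Real.norm_eq_abs] at this
        linarith
      have hmem : σ * y ∈ Icc (-(|x|+1)) (|x|+1) := by
        rw [mem_Icc, ← abs_le]
        rw [abs_mul, abs_of_pos hσ0]
        nlinarith [abs_nonneg y]
      calc ‖σ • deriv f (σ * y)‖ = σ * ‖deriv f (σ * y)‖ := by
            rw [norm_smul, Real.norm_eq_abs, abs_of_pos hσ0]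
        _ ≤ 1 * M := by
            apply mul_le_mul hσ1 (hM _ hmem) (norm_nonneg _) zero_le_one
        _ = M := one_mul M)
    (intervalIntegrable_const)
    (Filter.Eventually.of_forall fun σ _ y _ => by
      have h1 : HasDerivAt f (deriv f (σ * y)) (σ * y) := (hfd (σ * y)).hasDerivAt
      have h2 : HasDerivAt (fun y : ℝ => σ * y) σ y := by
        simpa using (hasDerivAt_id y).const_mul σ
      exact h1.scomp y h2)
  exact key.2

/-- The Fubini / substitution estimate. -/
lemma fubini_aux (a : ℝ) (ha : 0 < a) (g : ℝ → ℂ) (hgc : Continuous g) :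
    ∫ x in (-a)..a, (∫ σ in (0:ℝ)..1, σ * ‖g (σ * x)‖^2)
      ≤ ∫ x in (-a)..a, ‖g x‖^2 := by
  set C := ∫ x in (-a)..a, ‖g x‖^2 with hC
  have hgn : Continuous fun p : ℝ × ℝ => p.2 * ‖g (p.2 * p.1)‖^2 := by fun_prop
  have hle : -a ≤ a := by linarith
  have hint : Integrable (Function.uncurry fun x σ => σ * ‖g (σ * x)‖^2)
      ((volume.restrict (Ioc (-a) a)).prod (volume.restrict (Ioc (0:ℝ) 1))) := by
    rw [Measure.prod_restrict]
    have : IntegrableOn (Function.uncurry fun x σ => σ * ‖g (σ * x)‖^2)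
        (Icc (-a) a ×ˢ Icc (0:ℝ) 1) (volume.prod volume) := by
      apply hgn.continuousOn.integrableOn_compact
      exact isCompact_Icc.prod isCompact_Icc
    exact this.mono_set (prod_mono Ioc_subset_Icc_self Ioc_subset_Icc_self)
  have hswap := MeasureTheory.integral_integral_swap hint
  calc ∫ x in (-a)..a, (∫ σ in (0:ℝ)..1, σ * ‖g (σ * x)‖^2)
      = ∫ x in Ioc (-a) a, (∫ σ in Ioc (0:ℝ) 1, σ * ‖g (σ * x)‖^2) := by
        rw [intervalIntegral.integral_of_le hle]
        apply setIntegral_congr_fun measurableSet_Ioc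
        intro x _
        exact intervalIntegral.integral_of_le (by norm_num : (0:ℝ) ≤ 1)
    _ = ∫ σ in Ioc (0:ℝ) 1, (∫ x in Ioc (-a) a, σ * ‖g (σ * x)‖^2) := hswap
    _ ≤ ∫ σ in Ioc (0:ℝ) 1, C := by
        apply setIntegral_mono_on
        · exact hint.integral_prod_right
        · exact integrableOn_const (by simp)
        · exact measurableSet_Ioc
        · intro σ hσ
          have hσ0 : 0 < σ := hσ.1
          have hσ1 : σ ≤ 1 := hσ.2
          rw [MeasureTheory.integral_const_mul, ← intervalIntegral.integral_of_le hle]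
          have hsub : (∫ x in (-a)..a, (fun u => ‖g u‖^2) (σ * x))
              = σ⁻¹ • ∫ x in (σ * -a)..(σ * a), ‖g x‖^2 :=
            intervalIntegral.integral_comp_mul_left (fun u => ‖g u‖^2) hσ0.ne'
          rw [hsub, smul_eq_mul, ← mul_assoc, mul_inv_cancel₀ hσ0.ne', one_mul]
          apply intervalIntegral.integral_mono_interval (by nlinarith) (by nlinarith) (by nlinarith)
          · exact Filter.Eventually.of_forall fun x => by positivity
          · exact ((hgc.norm.pow 2)).intervalIntegrable _ _
    _ = C := by simp

/-- For f ∈ C¹, ‖∂ₓ V[f]‖_{L²(-a,a)} ≤ (1/√2) ‖f'‖_{L²(-a,a)}. -/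
theorem stmt_2 (a : ℝ) (ha : 0 < a) (f : ℝ → ℂ) (hf : ContDiff ℝ 1 f) :
    Real.sqrt (∫ x in (-a)..a, ‖deriv (fun y : ℝ => ∫ σ in (0:ℝ)..1, f (σ * y)) x‖ ^ 2)
      ≤ (1 / Real.sqrt 2) * Real.sqrt (∫ x in (-a)..a, ‖deriv f x‖ ^ 2) := by
  set g := deriv f with hg
  have hgc : Continuous g := hf.continuous_deriv le_rfl
  have hle : -a ≤ a := by linarith
  set C := ∫ x in (-a)..a, ‖g x‖^2 with hC
  have hC0 : 0 ≤ C :=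
    intervalIntegral.integral_nonneg hle (fun x _ => by positivity)
  have hDe : ∀ x : ℝ, deriv (fun y : ℝ => ∫ σ in (0:ℝ)..1, f (σ * y)) x
      = ∫ σ in (0:ℝ)..1, σ • g (σ * x) := fun x => (derivV_aux hf x).deriv
  -- continuity of the relevant parametric integrals
  have hDcont : Continuous fun x : ℝ => ∫ σ in (0:ℝ)..1, σ • g (σ * x) := by
    apply intervalIntegral.continuous_parametric_intervalIntegral_of_continuous'
    fun_prop
  have hΦcont : Continuous fun x : ℝ => ∫ σ in (0:ℝ)..1, σ * ‖g (σ * x)‖^2 := by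
    apply intervalIntegral.continuous_parametric_intervalIntegral_of_continuous'
    fun_prop
  -- pointwise Cauchy–Schwarz bound
  have hpt : ∀ x : ℝ, ‖∫ σ in (0:ℝ)..1, σ • g (σ * x)‖^2
      ≤ (1/2) * ∫ σ in (0:ℝ)..1, σ * ‖g (σ * x)‖^2 := by
    intro x
    have hnorm : ‖∫ σ in (0:ℝ)..1, σ • g (σ * x)‖
        ≤ ∫ σ in (0:ℝ)..1, σ * ‖g (σ * x)‖ := by
      calc ‖∫ σ in (0:ℝ)..1, σ • g (σ * x)‖
          ≤ ∫ σ in (0:ℝ)..1, ‖σ • g (σ * x)‖ :=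
            intervalIntegral.norm_integral_le_integral_norm (by norm_num)
        _ = ∫ σ in (0:ℝ)..1, σ * ‖g (σ * x)‖ := by
            apply intervalIntegral.integral_congr
            intro σ hσ
            rw [uIcc_of_le (by norm_num : (0:ℝ) ≤ 1)] at hσ
            show ‖σ • g (σ * x)‖ = σ * ‖g (σ * x)‖
            rw [norm_smul, Real.norm_eq_abs, abs_of_nonneg hσ.1]
    calc ‖∫ σ in (0:ℝ)..1, σ • g (σ * x)‖^2
        ≤ (∫ σ in (0:ℝ)..1, σ * ‖g (σ * x)‖)^2 :=
          pow_le_pow_left₀ (norm_nonneg _) hnorm 2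
      _ ≤ (1/2) * ∫ σ in (0:ℝ)..1, σ * ‖g (σ * x)‖^2 :=
          cs_half_aux ((hgc.comp (continuous_id.mul continuous_const)).norm)
  -- main integral estimate
  have hmain : (∫ x in (-a)..a, ‖∫ σ in (0:ℝ)..1, σ • g (σ * x)‖^2) ≤ (1/2) * C := by
    calc (∫ x in (-a)..a, ‖∫ σ in (0:ℝ)..1, σ • g (σ * x)‖^2)
        ≤ ∫ x in (-a)..a, (1/2) * ∫ σ in (0:ℝ)..1, σ * ‖g (σ * x)‖^2 := by
          apply intervalIntegral.integral_mono_on hle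
          · exact ((hDcont.norm.pow 2)).intervalIntegrable _ _
          · exact (continuous_const.mul hΦcont).intervalIntegrable _ _
          · exact fun x _ => hpt x
      _ = (1/2) * ∫ x in (-a)..a, (∫ σ in (0:ℝ)..1, σ * ‖g (σ * x)‖^2) :=
          intervalIntegral.integral_const_mul _ _
      _ ≤ (1/2) * C := by
          have := fubini_aux a ha g hgc
          linarith
  calc Real.sqrt (∫ x in (-a)..a, ‖deriv (fun y : ℝ => ∫ σ in (0:ℝ)..1, f (σ * y)) x‖ ^ 2)
      = Real.sqrt (∫ x in (-a)..a, ‖∫ σ in (0:ℝ)..1, σ • g (σ * x)‖^2) := by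
        congr 1
        apply intervalIntegral.integral_congr
        intro x _
        show ‖deriv (fun y : ℝ => ∫ σ in (0:ℝ)..1, f (σ * y)) x‖ ^ 2 = _
        rw [hDe x]
    _ ≤ Real.sqrt ((1/2) * C) := Real.sqrt_le_sqrt hmain
    _ = (1 / Real.sqrt 2) * Real.sqrt C := by
        rw [Real.sqrt_mul (by norm_num : (0:ℝ) ≤ 1/2), one_div, one_div,
          Real.sqrt_inv]
end

section
/- For f ∈ C²([-a,a]), the L²-norm of the second derivative of V[f] on (-a,a) satisfies ‖∂ₓₓ V[f]‖_{L²(-a,a)} ≤ (1/2) ‖f''‖_{L²(-a,a)}. -/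
open MeasureTheory intervalIntegral Set Metric

lemma par_deriv (g : ℝ → ℂ) (hg : Differentiable ℝ g) (hg' : Continuous (deriv g))
    (n : ℕ) (x₀ : ℝ) :
    HasDerivAt (fun y : ℝ => ∫ σ in (0:ℝ)..1, (σ ^ n : ℝ) • g (σ * y))
      (∫ σ in (0:ℝ)..1, (σ ^ (n+1) : ℝ) • deriv g (σ * x₀)) x₀ := by
  obtain ⟨C, hC⟩ := (isCompact_Icc (a := -(|x₀|+1)) (b := |x₀|+1)).exists_bound_of_continuousOn
    hg'.continuousOn
  have key := intervalIntegral.hasDerivAt_integral_of_dominated_loc_of_deriv_le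
    (F := fun x t => (t ^ n : ℝ) • g (t * x))
    (F' := fun x t => (t ^ (n+1) : ℝ) • deriv g (t * x))
    (x₀ := x₀) (a := (0:ℝ)) (b := 1) (μ := volume) (bound := fun _ => |C|)
    (s := ball x₀ 1) (ball_mem_nhds x₀ one_pos)
    ?_ ?_ ?_ ?_ ?_ ?_
  · exact key.2
  · filter_upwards with x
    exact (Continuous.smul (continuous_pow n) (hg.continuous.comp (continuous_id.mul continuous_const))).aestronglyMeasurable
  · exact (Continuous.smul (continuous_pow n) (hg.continuous.comp (continuous_id.mul continuous_const))).intervalIntegrable _ _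
  · exact (Continuous.smul (continuous_pow (n+1)) (hg'.comp (continuous_id.mul continuous_const))).aestronglyMeasurable
  · filter_upwards with t ht x hx
    rw [norm_smul]
    have ht' : t ∈ Set.Ioc (0:ℝ) 1 := by
      rwa [Set.uIoc_of_le (by norm_num : (0:ℝ) ≤ 1)] at ht
    have h1 : |t ^ (n+1)| ≤ 1 := by
      rw [abs_of_nonneg (pow_nonneg ht'.1.le _)]
      exact pow_le_one₀ ht'.1.le ht'.2
    have h2 : ‖deriv g (t * x)‖ ≤ |C| := by
      refine le_trans (hC _ ?_) (le_abs_self C)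
      have hxb : |x| ≤ |x₀| + 1 := by
        have := mem_ball_iff_norm.mp hx
        calc |x| ≤ |x₀| + |x - x₀| := by
              have := abs_sub_abs_le_abs_sub x x₀; linarith
          _ ≤ |x₀| + 1 := by
              simp only [Real.norm_eq_abs] at this; linarith [this.le]
      have : |t * x| ≤ |x₀| + 1 := by
        rw [abs_mul]
        calc |t| * |x| ≤ 1 * |x| := by
              apply mul_le_mul_of_nonneg_right _ (abs_nonneg x)
              rw [abs_of_pos ht'.1]; exact ht'.2
          _ = |x| := one_mul _
          _ ≤ |x₀| + 1 := hxb
      constructor <;> linarith [abs_le.mp this |>.1, abs_le.mp this |>.2]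
    calc ‖(t ^ (n+1) : ℝ)‖ * ‖deriv g (t * x)‖ ≤ 1 * |C| := by
          apply mul_le_mul _ h2 (norm_nonneg _) zero_le_one
          rwa [Real.norm_eq_abs]
      _ = |C| := one_mul _
  · exact intervalIntegrable_const
  · filter_upwards with t ht x hx
    have : HasDerivAt (fun x : ℝ => g (t * x)) (t • deriv g (t * x)) x := by
      have h1 : HasDerivAt (fun x : ℝ => t * x) t x := by
        simpa using (hasDerivAt_id x).const_mul t
      exact HasDerivAt.scomp x ((hg (t * x)).hasDerivAt) h1
    have := this.const_smul ((t:ℝ) ^ n)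
    convert this using 1
    · rfl
    · rw [smul_smul, pow_succ]

lemma second_deriv_V (f : ℝ → ℂ) (hf : ContDiff ℝ 2 f) (x : ℝ) :
    deriv (deriv (fun y : ℝ => ∫ σ in (0:ℝ)..1, f (σ * y))) x
      = ∫ σ in (0:ℝ)..1, (σ ^ 2 : ℝ) • deriv (deriv f) (σ * x) := by
  have h2 : ContDiff ℝ ((1:WithTop ℕ∞)+1) f := by
    exact_mod_cast hf
  have h := (contDiff_succ_iff_deriv).mp h2
  have hd1 : Differentiable ℝ f := h.1
  have h' := (contDiff_one_iff_deriv).mp h.2.2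
  have hd2 : Differentiable ℝ (deriv f) := h'.1
  have hc2 : Continuous (deriv (deriv f)) := h'.2
  have hc1 : Continuous (deriv f) := hd2.continuous
  have hstep1 : deriv (fun y : ℝ => ∫ σ in (0:ℝ)..1, f (σ * y))
      = fun y : ℝ => ∫ σ in (0:ℝ)..1, (σ ^ 1 : ℝ) • deriv f (σ * y) := by
    funext y
    have := par_deriv f hd1 hc1 0 y
    simp only [pow_zero, one_smul, zero_add] at this
    exact this.deriv
  rw [hstep1]
  have := par_deriv (deriv f) hd2 hc2 1 x
  exact this.deriv

lemma cs_bound (h : ℝ → ℂ) (hc : Continuous h) (x : ℝ) :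
    ‖∫ σ in (0:ℝ)..1, (σ ^ 2 : ℝ) • h (σ * x)‖ ^ 2
      ≤ (1/3) * ∫ σ in (0:ℝ)..1, σ ^ 2 * ‖h (σ * x)‖ ^ 2 := by
  set μ₀ := volume.restrict (Set.Ioc (0:ℝ) 1) with hμ₀
  -- bound of ‖h (σ x)‖ on σ ∈ [0,1]
  obtain ⟨C, hC⟩ := (isCompact_Icc (a := -|x|) (b := |x|)).exists_bound_of_continuousOn
    hc.continuousOn
  have hCb : ∀ σ ∈ Set.Ioc (0:ℝ) 1, ‖h (σ * x)‖ ≤ |C| := by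
    intro σ hσ
    refine le_trans (hC _ ?_) (le_abs_self C)
    have : |σ * x| ≤ |x| := by
      rw [abs_mul]
      calc |σ| * |x| ≤ 1 * |x| :=
            mul_le_mul_of_nonneg_right (by rw [abs_of_pos hσ.1]; exact hσ.2) (abs_nonneg x)
        _ = |x| := one_mul _
    exact ⟨by linarith [(abs_le.mp this).1], (abs_le.mp this).2⟩
  have hQnn : (0:ℝ) ≤ ∫ σ in (0:ℝ)..1, σ ^ 2 * ‖h (σ * x)‖ ^ 2 :=
    intervalIntegral.integral_nonneg (by norm_num) (fun σ _ => by positivity)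
  -- step 1: norm of integral ≤ integral of # norms
  have step1 : ‖∫ σ in (0:ℝ)..1, (σ ^ 2 : ℝ) • h (σ * x)‖
      ≤ ∫ σ in (0:ℝ)..1, σ ^ 2 * ‖h (σ * x)‖ := by
    refine le_trans (intervalIntegral.norm_integral_le_integral_norm (by norm_num)) (le_of_eq ?_)
    apply intervalIntegral.integral_congr
    intro σ _
    simp [norm_smul, sq_abs]
  -- step 2: Cauchy-Schwarz
  have hconj : Real.HolderConjugate 2 2 := Real.holderConjugate_iff.mpr ⟨by norm_num, by norm_num⟩
  have hu : MeasureTheory.MemLp (fun σ : ℝ => σ) (ENNReal.ofReal 2) μ₀ := by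
    refine MeasureTheory.MemLp.of_bound (continuous_id.aestronglyMeasurable) 1 ?_
    rw [hμ₀, MeasureTheory.ae_restrict_iff' measurableSet_Ioc]
    filter_upwards with σ hσ
    rw [Real.norm_eq_abs, abs_of_pos hσ.1]; exact hσ.2
  have hv : MeasureTheory.MemLp (fun σ : ℝ => σ * ‖h (σ * x)‖) (ENNReal.ofReal 2) μ₀ := by
    refine MeasureTheory.MemLp.of_bound ?_ (|C|) ?_
    · exact (continuous_id.mul ((hc.comp (by continuity)).norm)).aestronglyMeasurable
    · rw [hμ₀, MeasureTheory.ae_restrict_iff' measurableSet_Ioc]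
      filter_upwards with σ hσ
      rw [Real.norm_eq_abs, abs_mul, abs_of_pos hσ.1, abs_norm]
      calc σ * ‖h (σ * x)‖ ≤ 1 * |C| := by
            apply mul_le_mul hσ.2 (hCb σ hσ) (norm_nonneg _) zero_le_one
        _ = |C| := one_mul _
  have hunn : 0 ≤ᵐ[μ₀] (fun σ : ℝ => σ) := by
    filter_upwards [MeasureTheory.ae_restrict_mem measurableSet_Ioc] with σ hσ
    exact hσ.1.le
  have hvnn : 0 ≤ᵐ[μ₀] (fun σ : ℝ => σ * ‖h (σ * x)‖) := by
    filter_upwards [MeasureTheory.ae_restrict_mem measurableSet_Ioc] with σ hσ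
    exact mul_nonneg hσ.1.le (norm_nonneg _)
  have CS := MeasureTheory.integral_mul_le_Lp_mul_Lq_of_nonneg hconj hunn hvnn hu hv
  -- rewrite rpow to pow
  have e2 : ∀ y : ℝ, y ^ (2:ℝ) = y ^ 2 := fun y => by
    rw [show (2:ℝ) = ((2:ℕ):ℝ) by norm_num, Real.rpow_natCast]
  simp only [e2] at CS
  have int_eq : ∀ g : ℝ → ℝ, (∫ σ in (0:ℝ)..1, g σ) = ∫ σ, g σ ∂μ₀ := fun g => by
    rw [hμ₀]; exact integral_of_le (by norm_num)
  have hthird : (∫ σ, σ ^ 2 ∂μ₀) = 1/3 := by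
    rw [← int_eq (fun σ => σ ^ 2)]
    simp [integral_pow]; norm_num
  have step2 : (∫ σ in (0:ℝ)..1, σ ^ 2 * ‖h (σ * x)‖)
      ≤ Real.sqrt (1/3) * Real.sqrt (∫ σ in (0:ℝ)..1, σ ^ 2 * ‖h (σ * x)‖ ^ 2) := by
    have lhs_eq : (∫ σ in (0:ℝ)..1, σ ^ 2 * ‖h (σ * x)‖)
        = ∫ σ, σ * (σ * ‖h (σ * x)‖) ∂μ₀ := by
      rw [← int_eq]; apply intervalIntegral.integral_congr; intro σ _; ring
    have rhs_eq : (∫ σ, (σ * ‖h (σ * x)‖) ^ 2 ∂μ₀)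
        = ∫ σ in (0:ℝ)..1, σ ^ 2 * ‖h (σ * x)‖ ^ 2 := by
      rw [← int_eq]; apply intervalIntegral.integral_congr; intro σ _; ring
    rw [lhs_eq]
    refine le_trans CS (le_of_eq ?_)
    rw [hthird, rhs_eq, Real.sqrt_eq_rpow, Real.sqrt_eq_rpow]
  -- combine
  have hnn : (0:ℝ) ≤ ‖∫ σ in (0:ℝ)..1, (σ ^ 2 : ℝ) • h (σ * x)‖ := norm_nonneg _
  calc ‖∫ σ in (0:ℝ)..1, (σ ^ 2 : ℝ) • h (σ * x)‖ ^ 2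
      ≤ (Real.sqrt (1/3) * Real.sqrt (∫ σ in (0:ℝ)..1, σ ^ 2 * ‖h (σ * x)‖ ^ 2)) ^ 2 := by
        apply pow_le_pow_left₀ hnn (le_trans step1 step2)
    _ = (1/3) * ∫ σ in (0:ℝ)..1, σ ^ 2 * ‖h (σ * x)‖ ^ 2 := by
        rw [mul_pow, Real.sq_sqrt (by norm_num), Real.sq_sqrt hQnn]

lemma fubini_bound (a : ℝ) (ha : 0 < a) (f2 : ℝ → ℂ) (hc : Continuous f2) :
    MeasureTheory.Integrable (fun x => ∫ σ in (0:ℝ)..1, σ ^ 2 * ‖f2 (σ * x)‖ ^ 2)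
      (volume.restrict (Set.Ioc (-a) a)) ∧
    (∫ x in Set.Ioc (-a) a, ∫ σ in (0:ℝ)..1, σ ^ 2 * ‖f2 (σ * x)‖ ^ 2)
      ≤ (1/2) * ∫ x in (-a)..a, ‖f2 x‖ ^ 2 := by
  set μ := volume.restrict (Set.Ioc (-a) a) with hμ
  set ν := volume.restrict (Set.Ioc (0:ℝ) 1) with hν
  set H : ℝ → ℝ → ℝ := fun x σ => σ ^ 2 * ‖f2 (σ * x)‖ ^ 2 with hH
  have hcont : Continuous (Function.uncurry H) := by
    apply Continuous.mul
    · exact (continuous_snd).pow 2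
    · exact ((hc.comp (continuous_snd.mul continuous_fst)).norm).pow 2
  have hint : MeasureTheory.Integrable (Function.uncurry H) (μ.prod ν) := by
    rw [hμ, hν, MeasureTheory.Measure.prod_restrict]
    refine MeasureTheory.IntegrableOn.mono_set
      (hcont.continuousOn.integrableOn_compact ((isCompact_Icc (a := -a) (b := a)).prod
        (isCompact_Icc (a := (0:ℝ)) (b := 1)))) ?_
    exact Set.prod_mono Set.Ioc_subset_Icc_self Set.Ioc_subset_Icc_self
  have int_eq : ∀ x, (∫ σ in (0:ℝ)..1, σ ^ 2 * ‖f2 (σ * x)‖ ^ 2) = ∫ σ, H x σ ∂ν := fun x => by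
    rw [hν]; exact intervalIntegral.integral_of_le (by norm_num)
  constructor
  · have := hint.integral_prod_left
    simp only [Function.uncurry] at this
    convert this using 1
    funext x; exact int_eq x
  · have swap := MeasureTheory.integral_integral_swap hint
    set I := ∫ x in (-a)..a, ‖f2 x‖ ^ 2 with hI
    have hInn : 0 ≤ I :=
      intervalIntegral.integral_nonneg (by linarith) (fun x _ => by positivity)
    have hintI : IntervalIntegrable (fun t => ‖f2 t‖ ^ 2) volume (-a) a :=
      ((hc.norm).pow 2).intervalIntegrable _ _
    have inner_bound : ∀ σ ∈ Set.Ioc (0:ℝ) 1, (∫ x, H x σ ∂μ) ≤ σ * I := by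
      intro σ hσ
      have hσ0 : σ ≠ 0 := ne_of_gt hσ.1
      have e1 : (∫ x, H x σ ∂μ) = σ ^ 2 * ∫ x in (-a)..a, ‖f2 (σ * x)‖ ^ 2 := by
        rw [hμ, ← intervalIntegral.integral_of_le (by linarith : -a ≤ a),
          ← intervalIntegral.integral_const_mul]
      have e2 : (∫ x in (-a)..a, ‖f2 (σ * x)‖ ^ 2)
          = σ⁻¹ • ∫ t in σ * (-a)..σ * a, ‖f2 t‖ ^ 2 :=
        intervalIntegral.integral_comp_mul_left (fun t => ‖f2 t‖ ^ 2) hσ0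
      have e3 : (∫ t in σ * (-a)..σ * a, ‖f2 t‖ ^ 2) ≤ I := by
        refine intervalIntegral.integral_mono_interval ?_ ?_ ?_ ?_ hintI
        · nlinarith [hσ.1, hσ.2]
        · nlinarith [hσ.1.le]
        · nlinarith [hσ.1, hσ.2]
        · filter_upwards with t; positivity
      have e4 : (0:ℝ) ≤ σ ^ 2 * σ⁻¹ := mul_nonneg (by positivity) (inv_nonneg.mpr hσ.1.le)
      calc (∫ x, H x σ ∂μ) = σ ^ 2 * (σ⁻¹ * ∫ t in σ * (-a)..σ * a, ‖f2 t‖ ^ 2) := by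
            rw [e1, e2]; simp [smul_eq_mul]
        _ = (σ ^ 2 * σ⁻¹) * ∫ t in σ * (-a)..σ * a, ‖f2 t‖ ^ 2 := by ring
        _ ≤ (σ ^ 2 * σ⁻¹) * I := mul_le_mul_of_nonneg_left e3 e4
        _ = σ * I := by field_simp
    have hmi : MeasureTheory.Integrable (fun σ : ℝ => σ * I) ν := by
      rw [hν]; exact (continuous_id.mul continuous_const).integrableOn_Ioc
    have outer : (∫ σ, (∫ x, H x σ ∂μ) ∂ν) ≤ ∫ σ, σ * I ∂ν := by
      refine MeasureTheory.integral_mono_ae hint.integral_prod_right hmi ?_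
      filter_upwards [MeasureTheory.ae_restrict_mem measurableSet_Ioc] with σ hσ
      exact inner_bound σ hσ
    have final : (∫ σ, σ * I ∂ν) = (1/2) * I := by
      rw [hν, ← intervalIntegral.integral_of_le (by norm_num : (0:ℝ) ≤ 1)]
      rw [show (fun σ : ℝ => σ * I) = fun σ : ℝ => I * σ from funext fun σ => mul_comm σ I]
      rw [intervalIntegral.integral_const_mul, integral_id]
      ring
    calc (∫ x in Set.Ioc (-a) a, ∫ σ in (0:ℝ)..1, σ ^ 2 * ‖f2 (σ * x)‖ ^ 2)
        = ∫ x, (∫ σ, H x σ ∂ν) ∂μ := by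
          rw [hμ]; exact MeasureTheory.integral_congr_ae (Filter.Eventually.of_forall
            fun x => int_eq x)
      _ = ∫ σ, (∫ x, H x σ ∂μ) ∂ν := swap
      _ ≤ ∫ σ, σ * I ∂ν := outer
      _ = (1/2) * I := final

/-- For f ∈ C², ‖∂ₓₓ V[f]‖_{L²(-a,a)} ≤ (1/2) ‖f''‖_{L²(-a,a)}. -/
theorem stmt_3 (a : ℝ) (ha : 0 < a) (f : ℝ → ℂ) (hf : ContDiff ℝ 2 f) :
    Real.sqrt (∫ x in (-a)..a,
        ‖deriv (deriv (fun y : ℝ => ∫ σ in (0:ℝ)..1, f (σ * y))) x‖ ^ 2)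
      ≤ (1 / 2) * Real.sqrt (∫ x in (-a)..a, ‖deriv (deriv f) x‖ ^ 2) := by
  have h2 : ContDiff ℝ ((1:WithTop ℕ∞)+1) f := by exact_mod_cast hf
  have h := (contDiff_succ_iff_deriv).mp h2
  have h' := (contDiff_one_iff_deriv).mp h.2.2
  have hc2 : Continuous (deriv (deriv f)) := h'.2
  set f2 := deriv (deriv f) with hf2
  set I := ∫ x in (-a)..a, ‖f2 x‖ ^ 2 with hI
  have hInn : 0 ≤ I :=
    intervalIntegral.integral_nonneg (by linarith) (fun x _ => by positivity)
  obtain ⟨hqint, hqle⟩ := fubini_bound a ha f2 hc2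
  set S := ∫ x in (-a)..a,
      ‖deriv (deriv (fun y : ℝ => ∫ σ in (0:ℝ)..1, f (σ * y))) x‖ ^ 2 with hS
  have hSnn : 0 ≤ S :=
    intervalIntegral.integral_nonneg (by linarith) (fun x _ => by positivity)
  have hS_le : S ≤ (1/3) * ∫ x in Set.Ioc (-a) a, ∫ σ in (0:ℝ)..1, σ ^ 2 * ‖f2 (σ * x)‖ ^ 2 := by
    rw [hS, intervalIntegral.integral_of_le (by linarith : -a ≤ a),
      ← MeasureTheory.integral_const_mul]
    refine MeasureTheory.integral_mono_of_nonneg ?_ (hqint.const_mul (1/3)) ?_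
    · filter_upwards with x; positivity
    · filter_upwards with x
      rw [second_deriv_V f hf x]
      exact cs_bound f2 hc2 x
  have hS_le2 : S ≤ I / 6 := by
    calc S ≤ (1/3) * ∫ x in Set.Ioc (-a) a, ∫ σ in (0:ℝ)..1, σ ^ 2 * ‖f2 (σ * x)‖ ^ 2 := hS_le
      _ ≤ (1/3) * ((1/2) * I) := by linarith [hqle]
      _ = I / 6 := by ring
  calc Real.sqrt S ≤ Real.sqrt (I * (1/2)^2) := by
        apply Real.sqrt_le_sqrt; nlinarith
    _ = Real.sqrt I * (1/2) := by
        rw [Real.sqrt_mul hInn, Real.sqrt_sq (by norm_num)]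
    _ = (1/2) * Real.sqrt I := mul_comm _ _
end
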